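/- Let U ~ χ²_{n_a} and V ~ χ²_{n_b} be independent. For a, b > 0, define the event T = {V ≤ n_b + 2√(n_b b) + 2b, U > n_a − 2√(n_a a)}. Then P(Tᶜ) ≤ exp(−a) + exp(−b), and on T the ratio (U/n_a)/(V/n_b) is at least (1 − 2√(a/n_a))/(1 + 2√(b/n_b) + 2b/n_b). -/

import Mathlib

open MeasureTheory ProbabilityTheory Matrix
open scoped ENNReal NNReal BigOperators

/-- The standard Gaussian measure on `Fin n → ℝ` (iid `N(0,1)` coordinates). -/
noncomputable def stdGaussianPi (n : ℕ) : Measure (Fin n → ℝ) :=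
  Measure.pi fun _ => gaussianReal 0 1

/-- The chi-squared distribution with `d` degrees of freedom, i.e. the law of the
sum of squares of `d` independent standard Gaussians. -/
noncomputable def chiSq (d : ℕ) : Measure ℝ :=
  (stdGaussianPi d).map fun x => ∑ i, (x i) ^ 2

/-- The centered Gaussian measure on `ℝⁿ` with covariance matrix `S`, realized as the
pushforward of the standard Gaussian under multiplication by `S^{1/2}`. -/
noncomputable def gaussianVec {n : ℕ} (S : Matrix (Fin n) (Fin n) ℝ) (hS : S.PosSemidef) :
    Measure (Fin n → ℝ) :=
  (stdGaussianPi n).map fun x => ((hS.1.eigenvectorUnitary : Matrix (Fin n) (Fin n) ℝ) *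
    diagonal (Real.sqrt ∘ hS.1.eigenvalues) *
    (star hS.1.eigenvectorUnitary : Matrix (Fin n) (Fin n) ℝ)).mulVec x

section Aux
open Real


lemma one_sub_le_exp_aux {v : ℝ} (hv : 0 ≤ v) : 1 - v ≤ Real.exp (-v - v ^ 2 / 2) := by
  have hd : ∀ x : ℝ, HasDerivAt (fun v : ℝ => Real.exp (-v - v ^ 2 / 2) - (1 - v))
      (1 - (1 + x) * Real.exp (-x - x ^ 2 / 2)) x := by
    intro x
    have h1 : HasDerivAt (fun v : ℝ => -v - v ^ 2 / 2) (-1 - x) x := by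
      have h := ((hasDerivAt_pow 2 x).div_const 2)
      have h2 := (hasDerivAt_id x).neg.sub h
      exact h2.congr_deriv (by push_cast; ring)
    have h3 : HasDerivAt (fun v : ℝ => 1 - v) (-1) x := by
      simpa using (hasDerivAt_id x).const_sub 1
    have := (h1.exp).sub h3
    exact this.congr_deriv (by ring)
  have key : ∀ x : ℝ, 0 ≤ x → (1 + x) * Real.exp (-x - x ^ 2 / 2) ≤ 1 := by
    intro x hx
    have h1 : 1 + x ≤ Real.exp (x + x ^ 2 / 2) := by
      nlinarith [Real.add_one_le_exp (x + x ^ 2 / 2)]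
    have h2 : Real.exp (-x - x ^ 2 / 2) = (Real.exp (x + x ^ 2 / 2))⁻¹ := by
      rw [← Real.exp_neg]; ring_nf
    rw [h2, ← div_eq_mul_inv, div_le_one (Real.exp_pos _)]
    exact h1
  have hmono : MonotoneOn (fun v : ℝ => Real.exp (-v - v ^ 2 / 2) - (1 - v)) (Set.Ici 0) := by
    apply monotoneOn_of_deriv_nonneg (convex_Ici 0)
    · exact ((Real.continuous_exp.comp (by continuity)).sub (by continuity)).continuousOn
    · intro x _
      exact (hd x).differentiableAt.differentiableWithinAt
    · intro x hx
      rw [interior_Ici] at hx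
      rw [(hd x).deriv]
      have := key x (le_of_lt hx)
      linarith
  have h0 := hmono (Set.self_mem_Ici) (show v ∈ Set.Ici 0 from hv) hv
  simp only [neg_zero, zero_pow, sub_zero] at h0
  norm_num at h0
  linarith

lemma gaussian_sq_exp_fun {t : ℝ} :
    (fun x : ℝ => Real.exp (t * x ^ 2) * gaussianPDFReal 0 1 x) =
      fun x : ℝ => (Real.sqrt (2 * π))⁻¹ * Real.exp (-(1 / 2 - t) * x ^ 2) := by
  funext x
  simp only [gaussianPDFReal, NNReal.coe_one, mul_one, sub_zero]
  rw [mul_comm, mul_assoc, ← Real.exp_add]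
  congr 2
  ring

lemma integrable_exp_sq_gaussian {t : ℝ} (ht : t < 1 / 2) :
    Integrable (fun x => Real.exp (t * x ^ 2)) (gaussianReal 0 1) := by
  rw [gaussianReal_of_var_ne_zero _ one_ne_zero,
    integrable_withDensity_iff (measurable_gaussianPDF 0 1)
      (ae_of_all _ fun x => ENNReal.ofReal_lt_top)]
  have h : (fun x : ℝ => Real.exp (t * x ^ 2) * (gaussianPDF 0 1 x).toReal) =
      fun x : ℝ => (Real.sqrt (2 * π))⁻¹ * Real.exp (-(1 / 2 - t) * x ^ 2) := by
    rw [← gaussian_sq_exp_fun]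
    funext x
    rw [gaussianPDF, ENNReal.toReal_ofReal (gaussianPDFReal_nonneg 0 1 x)]
  rw [h]
  exact (integrable_exp_neg_mul_sq (by linarith)).const_mul _

lemma integral_exp_sq_gaussian {t : ℝ} (ht : t < 1 / 2) :
    ∫ x, Real.exp (t * x ^ 2) ∂(gaussianReal 0 1) = (Real.sqrt (1 - 2 * t))⁻¹ := by
  rw [gaussianReal_of_var_ne_zero _ one_ne_zero]
  have hpdf : gaussianPDF 0 1 = fun x => (((gaussianPDFReal 0 1 x).toNNReal : NNReal) : ENNReal) := rfl
  rw [hpdf, integral_withDensity_eq_integral_smul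
    ((measurable_gaussianPDFReal 0 1).real_toNNReal) _]
  simp only [NNReal.smul_def, Real.coe_toNNReal _ (gaussianPDFReal_nonneg 0 1 _), smul_eq_mul]
  have : (fun x : ℝ => gaussianPDFReal 0 1 x * Real.exp (t * x ^ 2)) =
      fun x : ℝ => (Real.sqrt (2 * π))⁻¹ * Real.exp (-(1 / 2 - t) * x ^ 2) := by
    rw [← gaussian_sq_exp_fun]; funext x; ring
  rw [this, integral_const_mul, integral_gaussian]
  have h2 : (0:ℝ) < 1 / 2 - t := by linarith
  rw [show π / (1 / 2 - t) = (2 * π) / (1 - 2 * t) by field_simp,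
    Real.sqrt_div (by positivity : (0:ℝ) ≤ 2 * π) _]
  have h3 : Real.sqrt (2 * π) ≠ 0 := by positivity
  field_simp

lemma measurable_sumSq (n : ℕ) : Measurable fun x : Fin n → ℝ => ∑ i, x i ^ 2 :=
  Finset.measurable_sum _ fun i _ => (measurable_pi_apply i).pow_const 2

instance (n : ℕ) : IsProbabilityMeasure (stdGaussianPi n) := by
  unfold stdGaussianPi; infer_instance

instance (n : ℕ) : IsProbabilityMeasure (chiSq n) :=
  Measure.isProbabilityMeasure_map (measurable_sumSq n).aemeasurable

lemma pi_exp_eq (n : ℕ) (t : ℝ) : (fun x : Fin n → ℝ => Real.exp (t * ∑ i, x i ^ 2)) =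
    fun x : Fin n → ℝ => ∏ i, Real.exp (t * x i ^ 2) := by
  funext x
  rw [← Real.exp_sum, Finset.mul_sum]

lemma integral_exp_sum_sq (n : ℕ) {t : ℝ} (ht : t < 1 / 2) :
    ∫ x, Real.exp (t * ∑ i, x i ^ 2) ∂(stdGaussianPi n) = ((Real.sqrt (1 - 2 * t))⁻¹) ^ n := by
  letI : MeasureSpace ℝ := ⟨gaussianReal 0 1⟩
  haveI : SigmaFinite (volume : Measure ℝ) :=
    inferInstanceAs (SigmaFinite (gaussianReal 0 1))
  have hvol : stdGaussianPi n = (volume : Measure (Fin n → ℝ)) := rfl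
  rw [hvol, pi_exp_eq]
  rw [volume_pi, MeasureTheory.integral_fintype_prod_eq_pow (ι := Fin n) (fun y : ℝ => Real.exp (t * y ^ 2))]
  rw [show (∫ x : ℝ, Real.exp (t * x ^ 2)) = ∫ x, Real.exp (t * x ^ 2) ∂(gaussianReal 0 1) from rfl,
    integral_exp_sq_gaussian ht, Fintype.card_fin]

lemma integrable_exp_sum_sq (n : ℕ) {t : ℝ} (ht : t < 1 / 2) :
    Integrable (fun x : Fin n → ℝ => Real.exp (t * ∑ i, x i ^ 2)) (stdGaussianPi n) := by
  letI : MeasureSpace ℝ := ⟨gaussianReal 0 1⟩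
  haveI : SigmaFinite (volume : Measure ℝ) :=
    inferInstanceAs (SigmaFinite (gaussianReal 0 1))
  have hvol : stdGaussianPi n = (volume : Measure (Fin n → ℝ)) := rfl
  rw [hvol, pi_exp_eq]
  exact Integrable.fintype_prod (fun _ => integrable_exp_sq_gaussian ht)

lemma integral_exp_chiSq (n : ℕ) {t : ℝ} (ht : t < 1 / 2) :
    ∫ y, Real.exp (t * y) ∂(chiSq n) = ((Real.sqrt (1 - 2 * t))⁻¹) ^ n := by
  rw [chiSq, integral_map (measurable_sumSq n).aemeasurable
    (by exact (Real.continuous_exp.comp (continuous_const.mul continuous_id)).aestronglyMeasurable)]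
  exact integral_exp_sum_sq n ht

lemma integrable_exp_chiSq (n : ℕ) {t : ℝ} (ht : t < 1 / 2) :
    Integrable (fun y => Real.exp (t * y)) (chiSq n) := by
  rw [chiSq, integrable_map_measure
    (by exact (Real.continuous_exp.comp (continuous_const.mul continuous_id)).aestronglyMeasurable)
    (measurable_sumSq n).aemeasurable]
  exact integrable_exp_sum_sq n ht

lemma chiSq_markov (n : ℕ) {t : ℝ} (ht : t < 1 / 2) (c : ℝ) :
    chiSq n {y | Real.exp (t * c) ≤ Real.exp (t * y)} ≤
      ENNReal.ofReal (Real.exp (-(t * c)) * ((Real.sqrt (1 - 2 * t))⁻¹) ^ n) := by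
  have hint := integrable_exp_chiSq n ht
  have hμ := mul_meas_ge_le_integral_of_nonneg
    (ae_of_all _ fun y => (Real.exp_pos (t * y)).le) hint (Real.exp (t * c))
  rw [integral_exp_chiSq n ht] at hμ
  have hfin : chiSq n {y | Real.exp (t * c) ≤ Real.exp (t * y)} ≠ ⊤ := measure_ne_top _ _
  rw [← ENNReal.ofReal_toReal hfin]
  apply ENNReal.ofReal_le_ofReal
  rw [Real.exp_neg, inv_mul_eq_div, le_div_iff₀ (Real.exp_pos _)]
  rw [measureReal_def] at hμ
  linarith [hμ]

lemma chiSq_nonpos (n : ℕ) (hn : 0 < n) : chiSq n {y : ℝ | y ≤ 0} = 0 := by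
  rw [chiSq, Measure.map_apply (measurable_sumSq n) (by exact measurableSet_Iic)]
  have hset : (fun x : Fin n → ℝ => ∑ i, x i ^ 2) ⁻¹' {y | y ≤ 0} =
      Set.pi Set.univ (fun _ : Fin n => ({0} : Set ℝ)) := by
    ext x
    simp only [Set.mem_preimage, Set.mem_setOf_eq, Set.mem_pi, Set.mem_univ, Set.mem_singleton_iff,
      forall_true_left]
    constructor
    · intro h i
      have hz : ∑ i, x i ^ 2 = 0 :=
        le_antisymm h (Finset.sum_nonneg fun i _ => sq_nonneg _)
      have := (Finset.sum_eq_zero_iff_of_nonneg (fun i _ => sq_nonneg (x i))).mp hz i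
        (Finset.mem_univ i)
      exact pow_eq_zero_iff two_ne_zero |>.mp this
    · intro h
      simp [h]
  rw [hset, stdGaussianPi, Measure.pi_pi]
  apply Finset.prod_eq_zero (Finset.mem_univ (⟨0, hn⟩ : Fin n))
  exact (gaussianReal_absolutelyContinuous 0 one_ne_zero) (Real.volume_singleton)
lemma chiSq_upper (n : ℕ) (hn : 0 < n) {x : ℝ} (hx : 0 < x) :
    chiSq n {y | (n:ℝ) + 2 * Real.sqrt (n * x) + 2 * x < y} ≤ ENNReal.ofReal (Real.exp (-x)) := by
  set u := Real.sqrt (x / n) with hu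
  have hn' : (0:ℝ) < n := by exact_mod_cast hn
  have hu0 : 0 < u := Real.sqrt_pos.mpr (by positivity)
  have husq : u ^ 2 = x / n := Real.sq_sqrt (by positivity)
  have hnx : Real.sqrt ((n:ℝ) * x) = n * u := by
    rw [hu, ← Real.sqrt_sq hn'.le, ← Real.sqrt_mul (by positivity)]
    congr 1
    field_simp
    exact Real.sq_sqrt (by positivity)
  have hxnu : x = n * u ^ 2 := by rw [husq]; field_simp
  set c := (n:ℝ) + 2 * Real.sqrt ((n:ℝ) * x) + 2 * x with hc
  have hcn : c = n * (1 + 2 * u + 2 * u ^ 2) := by rw [hc, hnx]; rw [hxnu]; ring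
  have hc0 : 0 < c := by rw [hcn]; positivity
  set t := (1 - n / c) / 2 with htdef
  have h1 : (n:ℝ) / c < 1 := (div_lt_one hc0).mpr (by rw [hcn]; nlinarith)
  have h1' : 0 < (n:ℝ) / c := by positivity
  have ht2 : 1 - 2 * t = n / c := by rw [htdef]; ring
  have ht0 : 0 < t := by rw [htdef]; linarith
  have htlt : t < 1 / 2 := by rw [htdef]; linarith
  have hsub : {y : ℝ | c < y} ⊆ {y | Real.exp (t * c) ≤ Real.exp (t * y)} := fun y hy =>
    Real.exp_le_exp.mpr (mul_le_mul_of_nonneg_left (le_of_lt hy) ht0.le)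
  refine le_trans (le_trans (measure_mono hsub) (chiSq_markov n htlt c))
    (ENNReal.ofReal_le_ofReal ?_)
  rw [ht2]
  have hsq : (Real.sqrt ((n:ℝ) / c))⁻¹ = Real.sqrt (c / n) := by
    rw [← Real.sqrt_inv]
    congr 1
    field_simp
  rw [hsq]
  have key : Real.sqrt (c / n) ≤ Real.exp u := by
    have h4 : c / n = 1 + 2 * u + 2 * u ^ 2 := by rw [hcn]; field_simp
    have h5 : (1:ℝ) + 2 * u + 2 * u ^ 2 ≤ Real.exp (2 * u) := by
      nlinarith [Real.quadratic_le_exp_of_nonneg (by positivity : (0:ℝ) ≤ 2 * u)]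
    have h6 : Real.exp (2 * u) = Real.exp u ^ 2 := by
      rw [← Real.exp_nat_mul]; norm_num
    calc Real.sqrt (c / n) ≤ Real.sqrt (Real.exp (2 * u)) :=
          Real.sqrt_le_sqrt (by rw [h4]; exact h5)
    _ = Real.exp u := by rw [h6, Real.sqrt_sq (Real.exp_pos u).le]
  have hpow : (Real.sqrt (c / n)) ^ n ≤ Real.exp ((n:ℝ) * u) :=
    calc (Real.sqrt (c / n)) ^ n ≤ (Real.exp u) ^ n :=
          pow_le_pow_left₀ (Real.sqrt_nonneg _) key n
    _ = Real.exp ((n:ℝ) * u) := by rw [← Real.exp_nat_mul]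
  have htc : t * c = (c - n) / 2 := by
    rw [htdef]
    field_simp
  calc Real.exp (-(t * c)) * Real.sqrt (c / n) ^ n
      ≤ Real.exp (-(t * c)) * Real.exp ((n:ℝ) * u) :=
        mul_le_mul_of_nonneg_left hpow (Real.exp_pos _).le
  _ = Real.exp ((n:ℝ) * u - (c - n) / 2) := by rw [htc, ← Real.exp_add]; ring_nf
  _ = Real.exp (-x) := by congr 1; rw [hcn, hxnu]; ring


lemma chiSq_lower (n : ℕ) (hn : 0 < n) {x : ℝ} (hx : 0 < x) :
    chiSq n {y | y ≤ (n:ℝ) - 2 * Real.sqrt (n * x)} ≤ ENNReal.ofReal (Real.exp (-x)) := by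
  set u := Real.sqrt (x / n) with hu
  have hn' : (0:ℝ) < n := by exact_mod_cast hn
  have hu0 : 0 < u := Real.sqrt_pos.mpr (by positivity)
  have husq : u ^ 2 = x / n := Real.sq_sqrt (by positivity)
  have hnx : Real.sqrt ((n:ℝ) * x) = n * u := by
    rw [hu, ← Real.sqrt_sq hn'.le, ← Real.sqrt_mul (by positivity)]
    congr 1
    field_simp
    exact Real.sq_sqrt (by positivity)
  have hxnu : x = n * u ^ 2 := by rw [husq]; field_simp
  set c := (n:ℝ) - 2 * Real.sqrt ((n:ℝ) * x) with hc
  have hcn : c = n * (1 - 2 * u) := by rw [hc, hnx]; ring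
  rcases le_or_gt c 0 with hc0 | hc0
  · refine le_trans (le_trans (measure_mono ?_) (le_of_eq (chiSq_nonpos n hn))) (zero_le')
    intro y hy
    exact le_trans hy hc0
  · have hu2 : 1 - 2 * u > 0 := by
      by_contra h
      push_neg at h
      nlinarith
    set t := ((n:ℝ) / c - 1) / 2 with htdef
    have h1 : (1:ℝ) < (n:ℝ) / c := by
      rw [lt_div_iff₀ hc0, hcn]
      nlinarith
    have ht0 : 0 < t := by rw [htdef]; linarith
    have htlt : -t < 1 / 2 := by linarith
    have ht2 : 1 - 2 * -t = (n:ℝ) / c := by rw [htdef]; ring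
    have hsub : {y : ℝ | y ≤ c} ⊆ {y | Real.exp (-t * c) ≤ Real.exp (-t * y)} := by
      intro y hy
      simp only [Set.mem_setOf_eq] at *
      apply Real.exp_le_exp.mpr
      nlinarith
    refine le_trans (le_trans (measure_mono hsub) (chiSq_markov n htlt c))
      (ENNReal.ofReal_le_ofReal ?_)
    rw [ht2]
    have hsq : (Real.sqrt ((n:ℝ) / c))⁻¹ = Real.sqrt (c / n) := by
      rw [← Real.sqrt_inv]
      congr 1
      field_simp
    rw [hsq]
    have key : Real.sqrt (c / n) ≤ Real.exp (-u - u ^ 2) := by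
      have h4 : c / n = 1 - 2 * u := by rw [hcn]; field_simp
      have h5 : (1:ℝ) - 2 * u ≤ Real.exp (-(2 * u) - (2 * u) ^ 2 / 2) :=
        one_sub_le_exp_aux (by positivity)
      have h6 : -(2 * u) - (2 * u) ^ 2 / 2 = 2 * (-u - u ^ 2) := by ring
      have h7 : Real.exp (2 * (-u - u ^ 2)) = Real.exp (-u - u ^ 2) ^ 2 := by
        rw [← Real.exp_nat_mul]; norm_num
      calc Real.sqrt (c / n) ≤ Real.sqrt (Real.exp (-u - u ^ 2) ^ 2) := by
            apply Real.sqrt_le_sqrt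
            rw [h4, ← h7, ← h6]
            exact h5
      _ = Real.exp (-u - u ^ 2) := Real.sqrt_sq (Real.exp_pos _).le
    have hpow : (Real.sqrt (c / n)) ^ n ≤ Real.exp ((n:ℝ) * (-u - u ^ 2)) :=
      calc (Real.sqrt (c / n)) ^ n ≤ (Real.exp (-u - u ^ 2)) ^ n :=
            pow_le_pow_left₀ (Real.sqrt_nonneg _) key n
      _ = Real.exp ((n:ℝ) * (-u - u ^ 2)) := by rw [← Real.exp_nat_mul]
    have htc : -t * c = -(((n:ℝ) - c) / 2) := by
      rw [htdef]
      field_simp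
    have htc2 : ((n:ℝ) - c) / 2 = n * u := by rw [hcn]; ring
    calc Real.exp (-(-t * c)) * Real.sqrt (c / n) ^ n
        ≤ Real.exp (-(-t * c)) * Real.exp ((n:ℝ) * (-u - u ^ 2)) :=
          mul_le_mul_of_nonneg_left hpow (Real.exp_pos _).le
    _ = Real.exp ((n:ℝ) * u + (n:ℝ) * (-u - u ^ 2)) := by
        rw [htc, neg_neg, htc2, ← Real.exp_add]
    _ = Real.exp (-x) := by congr 1; rw [hxnu]; ring

end Aux

open MeasureTheory in
/-- For independent `U ~ χ²_{n_a}` and `V ~ χ²_{n_b}` and `a, b > 0`, the event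
`T = {V ≤ n_b + 2√(n_b b) + 2b, U > n_a − 2√(n_a a)}` has
`P(Tᶜ) ≤ exp(−a) + exp(−b)`, and (almost surely) on `T` the ratio `(U/n_a)/(V/n_b)` is at
least `(1 − 2√(a/n_a))/(1 + 2√(b/n_b) + 2b/n_b)`. -/
theorem stmt_19 {Ω : Type*} [MeasureSpace Ω] [IsProbabilityMeasure (ℙ : Measure Ω)]
    (na nb : ℕ) (hna : 0 < na) (hnb : 0 < nb)
    (U V : Ω → ℝ) (hU : Measure.map U ℙ = chiSq na) (hV : Measure.map V ℙ = chiSq nb)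
    (hUV : IndepFun U V ℙ)
    (a b : ℝ) (ha : 0 < a) (hb : 0 < b) :
    ℙ ({ω | V ω ≤ nb + 2 * Real.sqrt (nb * b) + 2 * b ∧
          (na : ℝ) - 2 * Real.sqrt (na * a) < U ω}ᶜ) ≤
        ENNReal.ofReal (Real.exp (-a) + Real.exp (-b)) ∧
      ∀ᵐ ω ∂ℙ, (V ω ≤ nb + 2 * Real.sqrt (nb * b) + 2 * b ∧
          (na : ℝ) - 2 * Real.sqrt (na * a) < U ω) →
        (1 - 2 * Real.sqrt (a / na)) / (1 + 2 * Real.sqrt (b / nb) + 2 * b / nb) ≤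
          (U ω / na) / (V ω / nb) := by
  have hUmeas : AEMeasurable U ℙ := by
    by_contra h
    rw [Measure.map_of_not_aemeasurable h] at hU
    have h1 : (0 : Measure ℝ) Set.univ = 1 := by
      rw [hU]; exact measure_univ
    simp at h1
  have hVmeas : AEMeasurable V ℙ := by
    by_contra h
    rw [Measure.map_of_not_aemeasurable h] at hV
    have h1 : (0 : Measure ℝ) Set.univ = 1 := by
      rw [hV]; exact measure_univ
    simp at h1
  have hna' : (0:ℝ) < na := by exact_mod_cast hna
  have hnb' : (0:ℝ) < nb := by exact_mod_cast hnb
  constructor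
  · have hsub : {ω | V ω ≤ ↑nb + 2 * Real.sqrt (↑nb * b) + 2 * b ∧
        (na : ℝ) - 2 * Real.sqrt (↑na * a) < U ω}ᶜ ⊆
        (V ⁻¹' {y | (nb:ℝ) + 2 * Real.sqrt (↑nb * b) + 2 * b < y}) ∪
        (U ⁻¹' {y | y ≤ (na:ℝ) - 2 * Real.sqrt (↑na * a)}) := by
      intro ω hω
      simp only [Set.mem_compl_iff, Set.mem_setOf_eq, not_and, not_lt] at hω
      rcases le_or_gt (V ω) (↑nb + 2 * Real.sqrt (↑nb * b) + 2 * b) with h | h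
      · exact Or.inr (hω h)
      · exact Or.inl h
    refine le_trans (measure_mono hsub) (le_trans (measure_union_le _ _) ?_)
    have h1 : ℙ (V ⁻¹' {y | (nb:ℝ) + 2 * Real.sqrt (↑nb * b) + 2 * b < y}) ≤
        ENNReal.ofReal (Real.exp (-b)) := by
      rw [← Measure.map_apply_of_aemeasurable hVmeas (by exact measurableSet_Ioi), hV]
      exact chiSq_upper nb hnb hb
    have h2 : ℙ (U ⁻¹' {y | y ≤ (na:ℝ) - 2 * Real.sqrt (↑na * a)}) ≤
        ENNReal.ofReal (Real.exp (-a)) := by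
      rw [← Measure.map_apply_of_aemeasurable hUmeas (by exact measurableSet_Iic), hU]
      exact chiSq_lower na hna ha
    calc _ ≤ ENNReal.ofReal (Real.exp (-b)) + ENNReal.ofReal (Real.exp (-a)) := add_le_add h1 h2
    _ = ENNReal.ofReal (Real.exp (-a) + Real.exp (-b)) := by
        rw [← ENNReal.ofReal_add (Real.exp_pos _).le (Real.exp_pos _).le, add_comm]
  · have hVpos : ∀ᵐ ω ∂ℙ, 0 < V ω := by
      rw [ae_iff]
      have hset : {ω | ¬ 0 < V ω} = V ⁻¹' {y | y ≤ 0} := by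
        ext ω; simp [not_lt]
      rw [hset, ← Measure.map_apply_of_aemeasurable hVmeas (by exact measurableSet_Iic), hV]
      exact chiSq_nonpos nb hnb
    have hUnonneg : ∀ᵐ ω ∂ℙ, 0 ≤ U ω := by
      rw [ae_iff]
      have hset : {ω | ¬ 0 ≤ U ω} = U ⁻¹' {y | y < 0} := by
        ext ω; simp [not_le]
      refine le_antisymm ?_ (zero_le')
      rw [hset, ← Measure.map_apply_of_aemeasurable hUmeas (by exact measurableSet_Iio), hU]
      refine le_trans (measure_mono ?_) (le_of_eq (chiSq_nonpos na hna))
      intro y hy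
      simp only [Set.mem_setOf_eq] at hy ⊢
      linarith
    filter_upwards [hVpos, hUnonneg] with ω h1 h2 hT
    obtain ⟨hV2, hU2⟩ := hT
    set N := 1 - 2 * Real.sqrt (a / na) with hN
    set D := 1 + 2 * Real.sqrt (b / nb) + 2 * b / nb with hD
    have hDpos : 0 < D := by
      rw [hD]
      have := Real.sqrt_nonneg (b / nb)
      have : 0 < 2 * b / nb := by positivity
      linarith [Real.sqrt_nonneg (b / (nb:ℝ))]
    have hnbb : Real.sqrt ((nb:ℝ) * b) = nb * Real.sqrt (b / nb) := by
      rw [← Real.sqrt_sq hnb'.le, ← Real.sqrt_mul (by positivity)]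
      congr 1
      field_simp
      exact Real.sq_sqrt (by positivity)
    have hnaa : Real.sqrt ((na:ℝ) * a) = na * Real.sqrt (a / na) := by
      rw [← Real.sqrt_sq hna'.le, ← Real.sqrt_mul (by positivity)]
      congr 1
      field_simp
      exact Real.sq_sqrt (by positivity)
    have hcb : (nb:ℝ) + 2 * Real.sqrt (↑nb * b) + 2 * b = nb * D := by
      rw [hnbb, hD]
      field_simp
    have hca : (na:ℝ) - 2 * Real.sqrt (↑na * a) = na * N := by
      rw [hnaa, hN]
      ring
    rcases le_or_gt N 0 with hN0 | hN0
    · have hr : 0 ≤ (U ω / na) / (V ω / nb) :=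
        div_nonneg (div_nonneg h2 hna'.le) (div_nonneg h1.le hnb'.le)
      have hl : N / D ≤ 0 := div_nonpos_of_nonpos_of_nonneg hN0 hDpos.le
      linarith
    · have hVp : 0 < V ω / nb := by positivity
      rw [div_le_div_iff₀ hDpos hVp]
      have hv3 : V ω / nb ≤ D := by
        rw [div_le_iff₀ hnb']
        rw [hcb] at hV2
        linarith
      have hu3 : N ≤ U ω / na := by
        rw [le_div_iff₀ hna']
        rw [hca] at hU2
        linarith
      nlinarith [mul_le_mul_of_nonneg_left hv3 hN0.le, mul_le_mul_of_nonneg_right hu3 hDpos.le]
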